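/- Fix a kernel vector Â ∈ ℝⁿ with ∑_j |ŵ_{ij} Â_j| > 0 for each i, and define for greyness vectors x ∈ ℝⁿ the map F(x)_i = Â'_i · ∑_j max(w_{ij}°, x_j) m_{ij}, where m_{ij} = |ŵ_{ij} Â_j| / ∑_k |ŵ_{ik} Â_k| and Â'_i = 1/(1+exp(-λ ∑_j ŵ_{ij} Â_j)). Then for all x, y ∈ ℝⁿ, ‖F(x) - F(y)‖₂ ≤ (∑_{i,j} (Â'_i m_{ij})²)^{1/2} · ‖x - y‖₂; in particular if (∑_{i,j} (Â'_i m_{ij})²)^{1/2} < 1, F is a contraction and has a unique fixed point. -/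

import Mathlib

theorem fggcm_greyness_contraction (n : ℕ) (l : ℝ) (hl : 0 < l)
    (what : Matrix (Fin n) (Fin n) ℝ) (wgrey : Matrix (Fin n) (Fin n) ℝ)
    (Ahat : Fin n → ℝ) (hpos : ∀ i, 0 < ∑ j, |what i j * Ahat j|)
    (m : Matrix (Fin n) (Fin n) ℝ)
    (hm : ∀ i j, m i j = |what i j * Ahat j| / ∑ k, |what i k * Ahat k|)
    (Ahat' : Fin n → ℝ)
    (hAhat' : ∀ i, Ahat' i = 1 / (1 + Real.exp (-l * ∑ j, what i j * Ahat j)))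
    (F : (Fin n → ℝ) → (Fin n → ℝ))
    (hF : ∀ x i, F x i = Ahat' i * ∑ j, max (wgrey i j) (x j) * m i j) :
    (∀ x y : Fin n → ℝ,
      Real.sqrt (∑ i, (F x i - F y i) ^ 2) ≤
        Real.sqrt (∑ i, ∑ j, (Ahat' i * m i j) ^ 2) *
          Real.sqrt (∑ j, (x j - y j) ^ 2)) ∧
    (Real.sqrt (∑ i, ∑ j, (Ahat' i * m i j) ^ 2) < 1 →
      ∃! x : Fin n → ℝ, F x = x) := by
  have key : ∀ x y : Fin n → ℝ,
      Real.sqrt (∑ i, (F x i - F y i) ^ 2) ≤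
        Real.sqrt (∑ i, ∑ j, (Ahat' i * m i j) ^ 2) *
          Real.sqrt (∑ j, (x j - y j) ^ 2) := by
    intro x y
    rw [← Real.sqrt_mul (by positivity)]
    apply Real.sqrt_le_sqrt
    rw [Finset.sum_mul]
    apply Finset.sum_le_sum
    intro i _
    have hdiff : F x i - F y i =
        ∑ j, (Ahat' i * m i j) * (max (wgrey i j) (x j) - max (wgrey i j) (y j)) := by
      rw [hF, hF, ← mul_sub, ← Finset.sum_sub_distrib]
      rw [Finset.mul_sum]
      congr 1; ext j; ring
    rw [hdiff]
    calc (∑ j, (Ahat' i * m i j) * (max (wgrey i j) (x j) - max (wgrey i j) (y j))) ^ 2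
        ≤ (∑ j, (Ahat' i * m i j) ^ 2) *
          (∑ j, (max (wgrey i j) (x j) - max (wgrey i j) (y j)) ^ 2) := by
          exact Finset.sum_mul_sq_le_sq_mul_sq _ _ _
      _ ≤ (∑ j, (Ahat' i * m i j) ^ 2) * (∑ j, (x j - y j) ^ 2) := by
          apply mul_le_mul_of_nonneg_left _ (by positivity)
          apply Finset.sum_le_sum
          intro j _
          rw [← sq_abs (max _ _ - _), ← sq_abs (x j - y j)]
          apply pow_le_pow_left₀ (abs_nonneg _)
          rw [max_comm (wgrey i j) (x j), max_comm (wgrey i j) (y j)]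
          exact abs_max_sub_max_le_abs _ _ _
    |>.trans_eq rfl
  refine ⟨key, fun hK => ?_⟩
  set K : NNReal := (Real.sqrt (∑ i, ∑ j, (Ahat' i * m i j) ^ 2)).toNNReal with hKdef
  have hKcoe : (K : ℝ) = Real.sqrt (∑ i, ∑ j, (Ahat' i * m i j) ^ 2) :=
    Real.coe_toNNReal _ (Real.sqrt_nonneg _)
  have hKlt : K < 1 := by
    rw [← NNReal.coe_lt_coe, hKcoe]; simpa using hK
  let G : EuclideanSpace ℝ (Fin n) → EuclideanSpace ℝ (Fin n) := fun x => WithLp.toLp 2 (F x)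
  have hlip : LipschitzWith K G := by
    rw [lipschitzWith_iff_dist_le_mul]
    intro x y
    rw [EuclideanSpace.dist_eq, EuclideanSpace.dist_eq, hKcoe]
    simp only [Real.dist_eq, sq_abs]
    exact key x y
  have hC : ContractingWith K G := ⟨hKlt, hlip⟩
  refine ⟨(hC.fixedPoint G : EuclideanSpace ℝ (Fin n)), ?_, ?_⟩
  · exact congrArg WithLp.ofLp hC.fixedPoint_isFixedPt
  · intro x hx
    exact congrArg WithLp.ofLp (hC.fixedPoint_unique (x := WithLp.toLp 2 x) (congrArg (WithLp.toLp 2) hx))
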